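/- arXiv:cs/0203002 — 3 statements merged into one kernel-verified Lean document; each statement's English description precedes it below -/
import Mathlib

section
/- Let D be a finite set of defaults. If the formula a has a finite rank with respect to D and the pair (a,b) belongs to the rational closure of D, then (a,b) belongs to the lexicographic closure D^l of D. -/
open Set

/-- A default is a pair `(a, b)` of formulas, a formula being a set of models. -/
abbrev Default (M : Type*) := Set M × Set M

variable {M : Type*}

/-- The model `m` violates the default `d = (a, b)` iff `m ∈ a \ b`. -/
def Violates (m : M) (d : Default M) : Prop := m ∈ d.1 \ d.2

/-- The formula `c` is consistent with `B̃`, the set of material counterparts of the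
defaults in `B`, iff `c ∩ ⋂ B̃ ≠ ∅`. -/
def ConsistentWith (c : Set M) (B : Set (Default M)) : Prop :=
  (c ∩ ⋂ d ∈ B, (d.1ᶜ ∪ d.2)).Nonempty

/-- `B̃, c ⊨ d` : every model of `c` together with all material counterparts of `B`
is a model of `d`. -/
def EntailsWith (B : Set (Default M)) (c d : Set M) : Prop :=
  c ∩ ⋂ e ∈ B, (e.1ᶜ ∪ e.2) ⊆ d

/-- The level of the model `m` : the number of defaults of `D` violated by `m`. -/
noncomputable def level (D : Set (Default M)) (m : M) : ℕ :=
  {d ∈ D | Violates m d}.ncard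

/-- `F` is a maxbase of `D` for `c` : `F ⊆ D`, `c` is consistent with `F̃`, and no
subset of `D` of strictly larger cardinality has its material counterparts
consistent with `c`. -/
def Maxbase (D : Set (Default M)) (c : Set M) (F : Set (Default M)) : Prop :=
  F ⊆ D ∧ ConsistentWith c F ∧
    ∀ F' : Set (Default M), F' ⊆ D → F.ncard < F'.ncard → ¬ ConsistentWith c F'

/-- `E₀ = D`, `E_{i+1} = {(a,b) ∈ E_i | a is not consistent with Ẽ_i}`. -/
def Ee (D : Set (Default M)) : ℕ → Set (Default M)
  | 0 => D
  | (i + 1) => {d ∈ Ee D i | ¬ ConsistentWith d.1 (Ee D i)}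

/-- `c` has rank `i` with respect to `D` : `i` is the least natural number such that
`c` is consistent with `Ẽ_i`. -/
def HasRank (D : Set (Default M)) (c : Set M) (i : ℕ) : Prop :=
  ConsistentWith c (Ee D i) ∧ ∀ j < i, ¬ ConsistentWith c (Ee D j)

/-- `D_i = E_i \ E_{i+1}`. -/
def Dlev (D : Set (Default M)) (i : ℕ) : Set (Default M) := Ee D i \ Ee D (i + 1)

/-- `D_∞ = ⋂_i E_i`. -/
def Dinf (D : Set (Default M)) : Set (Default M) := ⋂ i, Ee D i

/-- `k` is the order of `D` : the least `k` such that `D_i = ∅` for every finite `i ≥ k`. -/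
def IsOrder (D : Set (Default M)) (k : ℕ) : Prop :=
  (∀ i, k ≤ i → Dlev D i = ∅) ∧ ∀ k', (∀ i, k' ≤ i → Dlev D i = ∅) → k ≤ k'

/-- The `(k+1)`-tuple associated to `X ⊆ D` : `n₀ = |D_∞ ∩ X|` and
`n_i = |D_{k-i} ∩ X|` for `1 ≤ i ≤ k`. -/
noncomputable def tup (D : Set (Default M)) (k : ℕ) (X : Set (Default M)) (i : ℕ) : ℕ :=
  if i = 0 then (Dinf D ∩ X).ncard else (Dlev D (k - i) ∩ X).ncard

/-- The seriousness ordering : `X ≺ Y` iff the tuple of `X` is lexicographically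
smaller than the tuple of `Y`. -/
def Serious (D : Set (Default M)) (k : ℕ) (X Y : Set (Default M)) : Prop :=
  ∃ j ≤ k, (∀ i < j, tup D k X i = tup D k Y i) ∧ tup D k X j < tup D k Y j

/-- `V(m)` : the set of defaults of `D` violated by the model `m`. -/
def Vset (D : Set (Default M)) (m : M) : Set (Default M) := {d ∈ D | Violates m d}

/-- The lexicographic closure `D^l` : `(a,b) ∈ D^l` iff every model of `a` that is
`≺`-minimal among the models of `a` satisfies `b` (models being compared via the
seriousness ordering of the sets of defaults they violate). -/
def LexClos (D : Set (Default M)) (k : ℕ) (a b : Set M) : Prop :=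
  ∀ m ∈ a, (∀ m' ∈ a, ¬ Serious D k (Vset D m') (Vset D m)) → m ∈ b

/-- `B` is a basis for `a` : `B ⊆ D`, `a` is consistent with `B̃`, and there is no
`B' ⊆ D` whose material counterparts are consistent with `a` and with `B ≺ B'`. -/
def LexBasis (D : Set (Default M)) (k : ℕ) (a : Set M) (B : Set (Default M)) : Prop :=
  B ⊆ D ∧ ConsistentWith a B ∧
    ∀ B' : Set (Default M), B' ⊆ D → ConsistentWith a B' → ¬ Serious D k B B'

/-- The rational closure of `D` : the pairs `(a,b)` such that either `a` has no rank,
or the rank of `a` is strictly smaller than the rank of `a ∩ bᶜ` (where `no rank`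
counts as larger than every natural number). -/
def RatClos (D : Set (Default M)) (a b : Set M) : Prop :=
  (¬ ∃ i, HasRank D a i) ∨
    ∃ i, HasRank D a i ∧
      ((¬ ∃ j, HasRank D (a ∩ bᶜ) j) ∨ ∃ j, HasRank D (a ∩ bᶜ) j ∧ i < j)

/-- `ℓ(X) = l` : `l` is the least index `i ≤ k` with `tup X i ≠ 0`, and `l = k + 1`
if the tuple of `X` is all zero. -/
def EllIs (D : Set (Default M)) (k : ℕ) (X : Set (Default M)) (l : ℕ) : Prop :=
  (l ≤ k ∧ tup D k X l ≠ 0 ∧ ∀ i < l, tup D k X i = 0) ∨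
    (l = k + 1 ∧ ∀ i ≤ k, tup D k X i = 0)

/-- `X ≪ Y` iff `ℓ(X) > ℓ(Y)`. -/
def Ll (D : Set (Default M)) (k : ℕ) (X Y : Set (Default M)) : Prop :=
  ∃ lx ly, EllIs D k X lx ∧ EllIs D k Y ly ∧ ly < lx

lemma Ee_succ_subset (D : Set (Default M)) (i : ℕ) : Ee D (i + 1) ⊆ Ee D i :=
  fun _ hd => hd.1

lemma Ee_antitone (D : Set (Default M)) {i j : ℕ} (h : i ≤ j) : Ee D j ⊆ Ee D i := by
  induction j with
  | zero => simp_all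
  | succ n ih =>
    rcases Nat.lt_or_ge i (n + 1) with h' | h'
    · exact (Ee_succ_subset D n).trans (ih (Nat.lt_succ_iff.mp h'))
    · have : i = n + 1 := le_antisymm h h'
      subst this; exact subset_rfl

lemma Ee_subset_D (D : Set (Default M)) (i : ℕ) : Ee D i ⊆ D :=
  Ee_antitone D (Nat.zero_le i)

lemma Ee_stable (D : Set (Default M)) (k : ℕ) (hk : ∀ i, k ≤ i → Dlev D i = ∅) :
    ∀ i, k ≤ i → Ee D i = Ee D k := by
  intro i hi
  induction i with
  | zero => simp_all
  | succ n ih =>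
    rcases Nat.lt_or_ge k (n + 1) with h' | h'
    · have hkn : k ≤ n := Nat.lt_succ_iff.mp h'
      have hdl := hk n hkn
      have h1 : Ee D n ⊆ Ee D (n + 1) := by
        intro d hd
        by_contra hnd
        exact absurd (Set.mem_empty_iff_false d).mpr
          (by rw [← hdl]; exact fun _ => (Set.mem_empty_iff_false d).mp (hdl ▸ ⟨hd, hnd⟩))
      rw [← ih hkn]
      exact le_antisymm (Ee_succ_subset D n) h1
    · have : k = n + 1 := le_antisymm hi h'
      rw [this]

lemma Dinf_subset_Ee (D : Set (Default M)) (i : ℕ) : Dinf D ⊆ Ee D i :=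
  Set.iInter_subset _ i

lemma not_consistent_of_no_rank (D : Set (Default M)) (c : Set M)
    (h : ¬ ∃ i, HasRank D c i) (i : ℕ) : ¬ ConsistentWith c (Ee D i) := by
  classical
  intro hc
  have hex : ∃ n, ConsistentWith c (Ee D n) := ⟨i, hc⟩
  exact h ⟨Nat.find hex, Nat.find_spec hex, fun j hj => Nat.find_min hex hj⟩

/-- If `a` has a finite rank and `(a,b)` is in the rational closure of `D`, then
`(a,b)` is in the lexicographic closure of `D`. -/
theorem lexClos_of_ratClos
    (D : Set (Default M)) (hD : D.Finite) (k : ℕ) (hk : IsOrder D k)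
    (a b : Set M) (hfin : ∃ i, HasRank D a i) (h : RatClos D a b) :
    LexClos D k a b := by
  classical
  obtain ⟨i, hri, hkey⟩ : ∃ i, HasRank D a i ∧ ¬ ConsistentWith (a ∩ bᶜ) (Ee D i) := by
    rcases h with h | ⟨i, hri, hrest⟩
    · exact absurd hfin h
    · refine ⟨i, hri, ?_⟩
      rcases hrest with hnr | ⟨j, hrj, hij⟩
      · exact not_consistent_of_no_rank D _ hnr i
      · exact hrj.2 i hij
  have hik : i ≤ k := by
    by_contra hgt
    push_neg at hgt
    have hstab : Ee D i = Ee D k := Ee_stable D k hk.1 i (le_of_lt hgt)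
    exact hri.2 k hgt (hstab ▸ hri.1)
  intro m hma hmin
  by_contra hmb
  obtain ⟨m₀, hm₀⟩ := hri.1
  have hm₀a : m₀ ∈ a := hm₀.1
  have hm₀nv : ∀ d ∈ Ee D i, ¬ Violates m₀ d := by
    intro d hd hv
    rcases Set.mem_iInter₂.mp hm₀.2 d hd with h1 | h2
    · exact h1 hv.1
    · exact hv.2 h2
  -- find a default in `Ee D i` violated by `m`
  have hd : ∃ d ∈ Ee D i, Violates m d := by
    by_contra hno
    push_neg at hno
    refine hkey ⟨m, ⟨hma, hmb⟩, Set.mem_iInter₂.mpr fun d hd => ?_⟩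
    by_cases hm1 : m ∈ d.1
    · by_cases hm2 : m ∈ d.2
      · exact Or.inr hm2
      · exact absurd ⟨hm1, hm2⟩ (hno d hd)
    · exact Or.inl hm1
  obtain ⟨d, hdE, hdV⟩ := hd
  have hdD : d ∈ D := Ee_subset_D D i hdE
  have hdVm : d ∈ Vset D m := ⟨hdD, hdV⟩
  -- a nonzero coordinate of the tuple of `Vset D m` below `k - i`
  obtain ⟨j₀, hj₀le, hj₀ne⟩ : ∃ j₀, j₀ ≤ k - i ∧ tup D k (Vset D m) j₀ ≠ 0 := by
    by_cases hdinf : d ∈ Dinf D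
    · refine ⟨0, Nat.zero_le _, ?_⟩
      have hfinset : (Dinf D ∩ Vset D m).Finite :=
        hD.subset ((Set.inter_subset_left).trans (Dinf_subset_Ee D 0))
      intro h0
      have htup : tup D k (Vset D m) 0 = (Dinf D ∩ Vset D m).ncard := by simp [tup]
      rw [htup, Set.ncard_eq_zero hfinset] at h0
      exact (Set.mem_empty_iff_false d).mp (h0 ▸ ⟨hdinf, hdVm⟩)
    · have hex : ∃ n, d ∉ Ee D n := by
        by_contra hall
        push_neg at hall
        exact hdinf (Set.mem_iInter.mpr hall)
      have hn₁spec : d ∉ Ee D (Nat.find hex) := Nat.find_spec hex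
      have hn₁pos : Nat.find hex ≠ 0 := by
        intro h0
        exact hn₁spec (by rw [h0]; exact hdD)
      obtain ⟨n, hn⟩ : ∃ n, Nat.find hex = n + 1 :=
        ⟨Nat.find hex - 1, (Nat.succ_pred_eq_of_pos (Nat.pos_of_ne_zero hn₁pos)).symm⟩
      rw [hn] at hn₁spec
      have hdn : d ∈ Ee D n := by
        by_contra hnd
        exact Nat.find_min hex (hn ▸ Nat.lt_succ_self n) hnd
      have hdlev : d ∈ Dlev D n := ⟨hdn, hn₁spec⟩
      have hin : i ≤ n := by
        by_contra hni
        push_neg at hni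
        exact hn₁spec (Ee_antitone D hni hdE)
      have hnk : n < k := by
        by_contra hkn
        push_neg at hkn
        have := hk.1 n hkn
        exact (Set.mem_empty_iff_false d).mp (this ▸ hdlev)
      refine ⟨k - n, Nat.sub_le_sub_left hin k, ?_⟩
      have hkn0 : k - n ≠ 0 := Nat.sub_ne_zero_of_lt hnk
      have hkkn : k - (k - n) = n := Nat.sub_sub_self (le_of_lt hnk)
      intro h0
      have htup : tup D k (Vset D m) (k - n) = (Dlev D n ∩ Vset D m).ncard := by
        simp [tup, hkn0, hkkn]
      rw [htup] at h0
      have hfinset : (Dlev D n ∩ Vset D m).Finite :=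
        hD.subset ((Set.inter_subset_left).trans ((Set.diff_subset).trans (Ee_subset_D D n)))
      rw [Set.ncard_eq_zero hfinset] at h0
      exact (Set.mem_empty_iff_false d).mp (h0 ▸ ⟨hdlev, hdVm⟩)
  -- all coordinates of the tuple of `Vset D m₀` below `k - i` vanish
  have hzero : ∀ j ≤ k - i, tup D k (Vset D m₀) j = 0 := by
    intro j hj
    by_cases hj0 : j = 0
    · simp only [tup, if_pos hj0]
      have : Dinf D ∩ Vset D m₀ = ∅ := by
        ext d'
        simp only [Set.mem_inter_iff, Set.mem_empty_iff_false, iff_false, not_and]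
        intro hd' hv'
        exact hm₀nv d' (Dinf_subset_Ee D i hd') hv'.2
      rw [this, Set.ncard_empty]
    · simp only [tup, if_neg hj0]
      have hikj : i ≤ k - j := by
        have hji : j + i ≤ k := (Nat.le_sub_iff_add_le hik).mp hj
        omega
      have : Dlev D (k - j) ∩ Vset D m₀ = ∅ := by
        ext d'
        simp only [Set.mem_inter_iff, Set.mem_empty_iff_false, iff_false, not_and]
        intro hd' hv'
        exact hm₀nv d' (Ee_antitone D hikj hd'.1) hv'.2
      rw [this, Set.ncard_empty]
  -- extract the least nonzero coordinate and conclude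
  have hP : ∃ j, tup D k (Vset D m) j ≠ 0 := ⟨j₀, hj₀ne⟩
  set j' := Nat.find hP with hj'
  have hj'le : j' ≤ j₀ := Nat.find_min' hP hj₀ne
  have hj'ki : j' ≤ k - i := le_trans hj'le hj₀le
  have hser : Serious D k (Vset D m₀) (Vset D m) := by
    refine ⟨j', le_trans hj'ki (Nat.sub_le k i), fun i' hi' => ?_, ?_⟩
    · have h1 : tup D k (Vset D m) i' = 0 := by
        by_contra hne
        exact absurd (Nat.find_min hP hi') (fun h => h hne)
      have h2 : tup D k (Vset D m₀) i' = 0 := hzero i' (le_trans (le_of_lt hi') hj'ki)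
      rw [h1, h2]
    · rw [hzero j' hj'ki]
      exact Nat.pos_of_ne_zero (Nat.find_spec hP)
  exact hmin m₀ hm₀a hser
end

section
/- Let D be a finite set of defaults. The pair (a,b) belongs to the lexicographic closure D^l of D if and only if for every basis B for a one has B̃, a ⊨ b. -/
open Set

variable {M : Type*}

lemma ee_subset (D : Set (Default M)) : ∀ i, Ee D i ⊆ D
  | 0 => subset_rfl
  | (i + 1) => fun d hd => ee_subset D i hd.1

/-- The `i`-th level set used in `tup`. -/
def levD (D : Set (Default M)) (k i : ℕ) : Set (Default M) :=
  if i = 0 then Dinf D else Dlev D (k - i)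

lemma tup_eq (D : Set (Default M)) (k : ℕ) (X : Set (Default M)) (i : ℕ) :
    tup D k X i = (levD D k i ∩ X).ncard := by
  unfold tup levD; split <;> rfl

lemma levD_subset (D : Set (Default M)) (k i : ℕ) : levD D k i ⊆ D := by
  unfold levD; split
  · exact (iInter_subset (Ee D) 0).trans subset_rfl
  · exact (diff_subset.trans (ee_subset D _))

lemma tup_mono {D : Set (Default M)} (hD : D.Finite) {X Y : Set (Default M)}
    (hXY : X ⊆ Y) (k i : ℕ) : tup D k X i ≤ tup D k Y i := by
  rw [tup_eq, tup_eq]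
  exact ncard_le_ncard (inter_subset_inter_right _ hXY)
    ((hD.subset (levD_subset D k i)).subset inter_subset_left)

lemma tup_compl {D : Set (Default M)} (hD : D.Finite) {X : Set (Default M)}
    (hX : X ⊆ D) (k i : ℕ) :
    tup D k (D \ X) i + tup D k X i = tup D k D i := by
  rw [tup_eq, tup_eq, tup_eq]
  have hfin : (levD D k i).Finite := hD.subset (levD_subset D k i)
  have h1 : levD D k i ∩ (D \ X) = levD D k i \ (levD D k i ∩ X) := by
    have hsub := levD_subset D k i
    ext d; constructor
    · rintro ⟨h, hd, hx⟩; exact ⟨h, fun hc => hx hc.2⟩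
    · rintro ⟨h, hx⟩; exact ⟨h, hsub h, fun hc => hx ⟨h, hc⟩⟩
  have h2 : levD D k i ∩ D = levD D k i := inter_eq_left.2 (levD_subset D k i)
  rw [h1, h2, ncard_diff inter_subset_left (hfin.subset inter_subset_left)]
  have hle : (levD D k i ∩ X).ncard ≤ (levD D k i).ncard :=
    ncard_le_ncard inter_subset_left hfin
  omega

lemma lex_aux (f h : ℕ → ℕ) (k j : ℕ) (hj : j ≤ k)
    (hle : ∀ i < j, f i ≤ h i) (hlt : f j < h j) :
    ∃ j' ≤ k, (∀ i < j', f i = h i) ∧ f j' < h j' := by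
  classical
  have hex : ∃ i, i ≤ j ∧ f i ≠ h i := ⟨j, le_rfl, Nat.ne_of_lt hlt⟩
  obtain ⟨hj'le, hne⟩ := Nat.find_spec hex
  refine ⟨Nat.find hex, hj'le.trans hj, ?_, ?_⟩
  · intro i hi
    have := Nat.find_min hex hi
    push_neg at this
    exact this (hi.le.trans hj'le)
  · rcases eq_or_lt_of_le hj'le with h' | h'
    · rw [h']; exact hlt
    · exact lt_of_le_of_ne (hle _ h') hne

lemma serious_of_le_left {D : Set (Default M)} {k : ℕ} {X Y Z : Set (Default M)}
    (hle : ∀ i ≤ k, tup D k X i ≤ tup D k Y i) (h : Serious D k Y Z) :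
    Serious D k X Z := by
  obtain ⟨j, hj, heq, hlt⟩ := h
  exact lex_aux (tup D k X) (tup D k Z) k j hj
    (fun i hi => (hle i (hi.le.trans hj)).trans_eq (heq i hi))
    (lt_of_le_of_lt (hle j hj) hlt)

lemma serious_of_le_right {D : Set (Default M)} {k : ℕ} {X Y Z : Set (Default M)}
    (hle : ∀ i ≤ k, tup D k Y i ≤ tup D k Z i) (h : Serious D k X Y) :
    Serious D k X Z := by
  obtain ⟨j, hj, heq, hlt⟩ := h
  exact lex_aux (tup D k X) (tup D k Z) k j hj
    (fun i hi => (heq i hi).trans_le (hle i (hi.le.trans hj)))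
    (lt_of_lt_of_le hlt (hle j hj))

lemma serious_compl {D : Set (Default M)} (hD : D.Finite) {k : ℕ}
    {X Y : Set (Default M)} (hX : X ⊆ D) (hY : Y ⊆ D)
    (h : Serious D k X Y) : Serious D k (D \ Y) (D \ X) := by
  obtain ⟨j, hj, heq, hlt⟩ := h
  refine ⟨j, hj, ?_, ?_⟩
  · intro i hi
    have h1 := tup_compl hD hX k i
    have h2 := tup_compl hD hY k i
    have := heq i hi
    omega
  · have h1 := tup_compl hD hX k j
    have h2 := tup_compl hD hY k j
    omega

lemma mem_matmodels {B : Set (Default M)} {m : M} :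
    m ∈ ⋂ d ∈ B, (d.1ᶜ ∪ d.2) ↔ ∀ d ∈ B, ¬ Violates m d := by
  simp only [mem_iInter, mem_union, mem_compl_iff, Violates, mem_diff]
  refine forall₂_congr fun d _ => ?_
  tauto

lemma vset_subset (D : Set (Default M)) (m : M) : Vset D m ⊆ D :=
  fun _ hd => hd.1

lemma mem_matmodels_compl_vset {D : Set (Default M)} {m : M} :
    m ∈ ⋂ d ∈ (D \ Vset D m), (d.1ᶜ ∪ d.2) :=
  mem_matmodels.2 fun d hd hv => hd.2 ⟨hd.1, hv⟩

lemma subset_compl_vset {D B : Set (Default M)} {m : M} (hB : B ⊆ D)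
    (hm : m ∈ ⋂ d ∈ B, (d.1ᶜ ∪ d.2)) : B ⊆ D \ Vset D m :=
  fun d hd => ⟨hB hd, fun hv => (mem_matmodels.1 hm) d hd hv.2⟩

/-- The default `(a,b)` is in the lexicographic closure of `D` iff for every basis
`B` for `a`, `B̃, a ⊨ b`. -/
theorem lexClos_iff_bases
    (D : Set (Default M)) (hD : D.Finite) (k : ℕ) (hk : IsOrder D k) (a b : Set M) :
    LexClos D k a b ↔
      ∀ B : Set (Default M), LexBasis D k a B → EntailsWith B a b := by
  constructor
  · intro h B hB m hm
    obtain ⟨hma, hmB⟩ := hm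
    refine h m hma ?_
    intro m' hm' hser
    have hBsub : B ⊆ D \ Vset D m := subset_compl_vset hB.1 hmB
    have hc : Serious D k (D \ Vset D m) (D \ Vset D m') :=
      serious_compl hD (vset_subset D m') (vset_subset D m) hser
    have hser' : Serious D k B (D \ Vset D m') :=
      serious_of_le_left (fun i _ => tup_mono hD hBsub k i) hc
    exact hB.2.2 (D \ Vset D m') diff_subset
      ⟨m', hm', mem_matmodels_compl_vset⟩ hser'
  · intro h m hma hmin
    have hbasis : LexBasis D k a (D \ Vset D m) := by
      refine ⟨diff_subset, ⟨m, hma, mem_matmodels_compl_vset⟩, ?_⟩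
      intro B' hB' hcons hser
      obtain ⟨m', hm'a, hm'B'⟩ := hcons
      have hB'sub : B' ⊆ D \ Vset D m' := subset_compl_vset hB' hm'B'
      have hser2 : Serious D k (D \ Vset D m) (D \ Vset D m') :=
        serious_of_le_right (fun i _ => tup_mono hD hB'sub k i) hser
      have hser3 := serious_compl hD diff_subset diff_subset hser2
      rw [diff_diff_cancel_left (vset_subset D m),
        diff_diff_cancel_left (vset_subset D m')] at hser3
      exact hmin m' hm'a hser3
    exact h (D \ Vset D m) hbasis ⟨hma, mem_matmodels_compl_vset⟩
end

section
/- Let D be a finite set of defaults. There is no basis for a formula a if and only if a is a logical contradiction, i.e., a = ∅. -/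
open Set

variable {M : Type*}

lemma serious_trans (D : Set (Default M)) (k : ℕ) {X Y Z : Set (Default M)}
    (h1 : Serious D k X Y) (h2 : Serious D k Y Z) : Serious D k X Z := by
  obtain ⟨j1, hj1, he1, hl1⟩ := h1
  obtain ⟨j2, hj2, he2, hl2⟩ := h2
  rcases lt_trichotomy j1 j2 with h | h | h
  · exact ⟨j1, hj1, fun i hi => (he1 i hi).trans (he2 i (hi.trans h)),
      by rw [← he2 j1 h]; exact hl1⟩
  · subst h
    exact ⟨j1, hj1, fun i hi => (he1 i hi).trans (he2 i hi), hl1.trans hl2⟩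
  · exact ⟨j2, hj2, fun i hi => (he1 i (hi.trans h)).trans (he2 i hi),
      by rw [he1 j2 h]; exact hl2⟩

lemma serious_irrefl (D : Set (Default M)) (k : ℕ) (X : Set (Default M)) :
    ¬ Serious D k X X := by
  rintro ⟨j, -, -, hl⟩
  exact lt_irrefl _ hl

/-- There is no basis for `a` iff `a` is a logical contradiction. -/
theorem no_basis_iff_contradiction
    (D : Set (Default M)) (hD : D.Finite) (k : ℕ) (hk : IsOrder D k) (a : Set M) :
    (¬ ∃ B : Set (Default M), LexBasis D k a B) ↔ a = ∅ := by
  constructor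
  · intro hno
    by_contra hne
    apply hno
    -- the collection of subsets of D consistent with a
    set r : Set (Default M) → Set (Default M) → Prop := fun X Y => Serious D k Y X with hr
    haveI : IsIrrefl (Set (Default M)) r := ⟨fun X h => serious_irrefl D k X h⟩
    haveI : IsTrans (Set (Default M)) r :=
      ⟨fun X Y Z h1 h2 => serious_trans D k h2 h1⟩
    haveI : IsStrictOrder (Set (Default M)) r := {}
    set S : Set (Set (Default M)) := {B | B ⊆ D ∧ ConsistentWith a B} with hS
    have hSfin : S.Finite := hD.finite_subsets.subset fun B hB => hB.1
    have hcons0 : ConsistentWith a (∅ : Set (Default M)) := by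
      simp only [ConsistentWith, Set.mem_empty_iff_false, Set.iInter_of_empty,
        Set.iInter_univ, Set.inter_univ]
      exact Set.nonempty_iff_ne_empty.2 hne
    have h0 : (∅ : Set (Default M)) ∈ S := ⟨Set.empty_subset D, hcons0⟩
    have hwf : S.WellFoundedOn r := hSfin.wellFoundedOn
    obtain ⟨⟨B, hB⟩, -, hmin⟩ :=
      hwf.has_min Set.univ ⟨⟨∅, h0⟩, Set.mem_univ _⟩
    refine ⟨B, hB.1, hB.2, ?_⟩
    intro B' hB'sub hB'cons hser
    exact hmin ⟨B', ⟨hB'sub, hB'cons⟩⟩ (Set.mem_univ _) hser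
  · rintro rfl ⟨B, -, hcons, -⟩
    obtain ⟨m, hm, -⟩ := hcons
    exact hm
end
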